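/- Let a, b, c, d be four distinct letters. For all r, s, i ∈ ℕ and all j with 1 ≤ j ≤ r + 1, the extended Wichmann word W(r, s, i, j) = a b^r ⋄^r (a ⋄^{2r})^r b (⋄^{4r+2} c)^s (⋄^{2r+1} d)^{r+1} b^r (⋄^r c)^i ⋄^{j−1} c over the alphabet {a, b, c, d} is unbordered. -/
import Mathlib


/-- The domain of a partial word (a list over `Option A`, where `none` is the hole):
the set of positions carrying a letter. -/
def PartialWord.domain {A : Type*} (w : List (Option A)) : Finset ℕ :=
  (Finset.range w.length).filter fun i => (w.getD i none).isSome

/-- Two partial words are compatible if they have the same length and agree on the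
intersection of their domains. -/
def PartialWord.Compatible {A : Type*} (w v : List (Option A)) : Prop :=
  w.length = v.length ∧
    ∀ i ∈ PartialWord.domain w ∩ PartialWord.domain v, w.getD i none = v.getD i none

/-- A partial word is unbordered if no nonempty proper prefix is compatible with a
suffix of the same length. -/
def PartialWord.Unbordered {A : Type*} (w : List (Option A)) : Prop :=
  ∀ x y : List (Option A), x <+: w → y <:+ w → x ≠ [] → x.length < w.length →
    x.length = y.length → ¬ PartialWord.Compatible x y

/-- The number of holes of a partial word. -/
def PartialWord.holes {A : Type*} (w : List (Option A)) : ℕ :=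
  w.countP fun x => x.isNone

/-- `u` repeated `t` times. -/
def listPow {α : Type*} (u : List α) (t : ℕ) : List α := (List.replicate t u).flatten

/-- A complete sparse ruler of length `n`. -/
def IsCompleteRuler (n : ℕ) (R : Finset ℕ) : Prop :=
  (∀ x ∈ R, x ≤ n) ∧ 0 ∈ R ∧ n ∈ R ∧ ∀ d ≤ n, ∃ r ∈ R, ∃ s ∈ R, r = s + d

/-- Minimum number of marks of a complete sparse ruler of length `n`. -/
noncomputable def M1 (n : ℕ) : ℕ :=
  sInf {k | ∃ R : Finset ℕ, IsCompleteRuler n R ∧ R.card = k}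

/-- Maximum number of holes an unbordered partial word of length `n` over an alphabet
of size `k` can have. -/
noncomputable def HB (k n : ℕ) : ℕ :=
  sSup {h | ∃ w : List (Option (Fin k)),
    w.length = n ∧ PartialWord.Unbordered w ∧ PartialWord.holes w = h}

/-- The ruler (set of partial sums) given by a difference representation. -/
def rulerOfDiffs (D : List ℕ) : Finset ℕ :=
  ((List.range (D.length + 1)).map fun t => (D.take t).sum).toFinset

/-- The difference representation of the extended Wichmann ruler `w₁(r,s,i,j)`. -/
def wichmannDiffs (r s i j : ℕ) : List ℕ :=
  List.replicate r 1 ++ [r + 1] ++ List.replicate r (2 * r + 1) ++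
    List.replicate s (4 * r + 3) ++ List.replicate (r + 1) (2 * r + 2) ++
    List.replicate r 1 ++ List.replicate i (r + 1) ++ [j]

/-- A complete two-dimensional sparse ruler: an `(n,m)`-ruler. -/
def IsRuler2 (n m : ℕ) (R : Finset (ℕ × ℕ)) : Prop :=
  (∀ p ∈ R, p.1 < n ∧ p.2 < m) ∧
    ∀ x y : ℤ, |x| ≤ (n : ℤ) - 1 → |y| ≤ (m : ℤ) - 1 →
      ∃ p ∈ R, ∃ q ∈ R, (p.1 : ℤ) - (q.1 : ℤ) = x ∧ (p.2 : ℤ) - (q.2 : ℤ) = y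

/-- Minimum number of marks of an `(n,m)`-ruler. -/
noncomputable def M2 (n m : ℕ) : ℕ :=
  sInf {k | ∃ R : Finset (ℕ × ℕ), IsRuler2 n m R ∧ R.card = k}

/-- The domain of an `n` by `m` two-dimensional partial word. -/
def domain2 {A : Type*} (n m : ℕ) (w : ℕ × ℕ → Option A) : Finset (ℕ × ℕ) :=
  (Finset.range n ×ˢ Finset.range m).filter fun p => (w p).isSome

/-- An `n` by `m` two-dimensional partial word is unbordered if its domain is an
`(n,m)`-ruler and every nonzero measurable vector can be measured between two
positions carrying distinct letters. -/
def Unbordered2 {A : Type*} (n m : ℕ) (w : ℕ × ℕ → Option A) : Prop :=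
  IsRuler2 n m (domain2 n m w) ∧
    ∀ x y : ℤ, |x| ≤ (n : ℤ) - 1 → |y| ≤ (m : ℤ) - 1 → ¬(x = 0 ∧ y = 0) →
      ∃ p ∈ domain2 n m w, ∃ q ∈ domain2 n m w,
        (p.1 : ℤ) - (q.1 : ℤ) = x ∧ (p.2 : ℤ) - (q.2 : ℤ) = y ∧ w p ≠ w q

/-- Number of holes of an `n` by `m` two-dimensional partial word. -/
def holes2 {A : Type*} (n m : ℕ) (w : ℕ × ℕ → Option A) : ℕ :=
  n * m - (domain2 n m w).card

/-- Maximum number of holes an unbordered `n` by `m` two-dimensional partial word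
over an alphabet of size `k` can have. -/
noncomputable def HB2 (k n m : ℕ) : ℕ :=
  sSup {h | ∃ w : ℕ × ℕ → Option (Fin k), Unbordered2 n m w ∧ holes2 n m w = h}
lemma listPow_succ {α : Type*} (u : List α) (t : ℕ) : listPow u (t+1) = u ++ listPow u t := by
  simp [listPow, List.replicate_succ]

lemma listPow_length {α : Type*} (u : List α) (t : ℕ) : (listPow u t).length = t * u.length := by
  induction t with
  | zero => simp [listPow]
  | succ n ih => rw [listPow_succ]; simp [ih]; ring

lemma getD_replicate {A : Type*} {x : Option A} {m n : ℕ} (h : m < n) :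
    (List.replicate n x).getD m none = x := by
  simp [List.getD_eq_getElem?_getD, List.getElem?_replicate, h]

lemma listPow_getD {A : Type*} (u : List (Option A)) {t q e : ℕ} (hq : q < t) (he : e < u.length) :
    (listPow u t).getD (q * u.length + e) none = u.getD e none := by
  induction q generalizing t with
  | zero =>
    obtain ⟨t', rfl⟩ : ∃ t', t = t' + 1 := ⟨t - 1, by omega⟩
    rw [listPow_succ]
    simpa using List.getD_append _ _ _ _ (by simpa using he)
  | succ n ih =>
    obtain ⟨t', rfl⟩ : ∃ t', t = t' + 1 := ⟨t - 1, by omega⟩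
    rw [listPow_succ, List.getD_append_right _ _ _ _ (by nlinarith [u.length.zero_le])]
    have : (n + 1) * u.length + e - u.length = n * u.length + e := by ring_nf; omega
    rw [this]
    exact ih (by omega)

lemma unbordered_of_conflicts {A : Type*} {w : List (Option A)}
    (H : ∀ k, 1 ≤ k → k < w.length →
      ∃ p l₁ l₂, p + k < w.length ∧ w.getD p none = some l₁ ∧
        w.getD (p + k) none = some l₂ ∧ l₁ ≠ l₂) :
    PartialWord.Unbordered w := by
  rintro x y hx hy hne hlt hlen ⟨hcl, hcomp⟩
  obtain ⟨k, hk⟩ : ∃ k, w.length = x.length + k := ⟨_, (Nat.add_sub_cancel' hlt.le).symm⟩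
  have hxl : 1 ≤ x.length := List.length_pos_iff.2 hne
  obtain ⟨p, l₁, l₂, hpk, h1, h2, hne'⟩ := H k (by omega) (by omega)
  have hp : p < x.length := by omega
  obtain ⟨x2, rfl⟩ := hx
  obtain ⟨y1, hy1⟩ := hy
  simp only [List.length_append] at hk hpk hlt
  have hylen : y1.length = k := by
    have := congrArg List.length hy1
    simp at this
    omega
  have e1 : x.getD p none = some l₁ := by
    rw [← List.getD_append _ x2 _ _ hp]; exact h1
  have e2 : y.getD p none = some l₂ := by
    rw [← hy1, List.getD_append_right _ _ _ _ (by omega : y1.length ≤ p + k), hylen,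
      Nat.add_sub_cancel] at h2
    exact h2
  have hd : p ∈ PartialWord.domain x ∩ PartialWord.domain y := by
    simp only [Finset.mem_inter, PartialWord.domain, Finset.mem_filter, Finset.mem_range]
    rw [List.getD_eq_getElem?_getD] at e1 e2
    exact ⟨⟨hp, by simp [e1]⟩, ⟨by omega, by simp [e2]⟩⟩
  have := hcomp p hd
  rw [e1, e2] at this
  exact hne' (Option.some.inj this)

lemma getD_concat_right {A : Type*} (m : ℕ) {w₁ w₂ : List (Option A)} {n : ℕ} {x : Option A}
    (hm : w₁.length = m) (h : w₂.getD n none = x) : (w₁ ++ w₂).getD (m + n) none = x := by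
  subst hm
  rw [List.getD_append_right _ _ _ _ (by omega)]
  rw [Nat.add_sub_cancel_left]
  exact h

lemma getD_concat_left {A : Type*} {w₁ w₂ : List (Option A)} {n : ℕ} {x : Option A}
    (h : w₁.getD n none = x) (hn : n < w₁.length) : (w₁ ++ w₂).getD n none = x := by
  rw [List.getD_append _ _ _ _ hn]; exact h


lemma mul_lt_mul_of_lt {x y L e : ℕ} (h : x < y) (he : e < L) : x * L + e < y * L := by
  have h1 : (x+1) * L ≤ y * L := Nat.mul_le_mul_right L (by omega)
  have h2 : (x+1) * L = x * L + L := by ring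
  omega

section Wrd
variable {A : Type*} (a b c d : A) (r s i j : ℕ)

def Wrd : List (Option A) :=
  [some a] ++ List.replicate r (some b) ++ List.replicate r none ++
    listPow ([some a] ++ List.replicate (2 * r) none) r ++ [some b] ++
    listPow (List.replicate (4 * r + 2) none ++ [some c]) s ++
    listPow (List.replicate (2 * r + 1) none ++ [some d]) (r + 1) ++
    List.replicate r (some b) ++
    listPow (List.replicate r none ++ [some c]) i ++
    List.replicate (j - 1) none ++ [some c]

lemma Wrd_assoc : Wrd a b c d r s i j =
    [some a] ++ (List.replicate r (some b) ++ (List.replicate r none ++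
    (listPow ([some a] ++ List.replicate (2 * r) none) r ++ ([some b] ++
    (listPow (List.replicate (4 * r + 2) none ++ [some c]) s ++
    (listPow (List.replicate (2 * r + 1) none ++ [some d]) (r + 1) ++
    (List.replicate r (some b) ++
    (listPow (List.replicate r none ++ [some c]) i ++
    (List.replicate (j - 1) none ++ [some c]))))))))) := by
  simp [Wrd, List.append_assoc]

lemma Wrd_length : (Wrd a b c d r s i j).length =
    1+2*r+r*(2*r+1)+1+s*(4*r+3)+(r+1)*(2*r+2)+r+i*(r+1)+(j-1)+1 := by
  simp [Wrd, listPow_length]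
  ring_nf

lemma mark_a0 : (Wrd a b c d r s i j).getD 0 none = some a ∧ 0 < (Wrd a b c d r s i j).length := by
  constructor
  · rw [Wrd_assoc]; exact getD_concat_left rfl (by simp)
  · rw [Wrd_length]; omega

lemma mark_b1 {e' : ℕ} (h : e' < r) :
    (Wrd a b c d r s i j).getD (1 + e') none = some b ∧
      1 + e' < (Wrd a b c d r s i j).length := by
  constructor
  · rw [Wrd_assoc]
    exact getD_concat_right 1 (by simp) (getD_concat_left (getD_replicate h) (by simp [h]))
  · rw [Wrd_length]; omega

lemma mark_a {m' : ℕ} (h : m' < r) :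
    (Wrd a b c d r s i j).getD (1+2*r+m'*(2*r+1)) none = some a ∧
      1+2*r+m'*(2*r+1) < (Wrd a b c d r s i j).length := by
  constructor
  · rw [Wrd_assoc]
    have harr : 1+2*r+m'*(2*r+1) =
        1 + (r + (r + (m' * ([some a] ++ List.replicate (2*r) (none : Option A)).length + 0))) := by
      simp; ring
    rw [harr]
    refine getD_concat_right 1 (by simp) ?_
    refine getD_concat_right r (by simp) ?_
    refine getD_concat_right r (by simp) ?_
    refine getD_concat_left ?_ ?_
    · rw [listPow_getD _ h (by simp)]
      exact getD_concat_left rfl (by simp)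
    · rw [listPow_length]
      exact mul_lt_mul_of_lt h (by simp)
  · rw [Wrd_length]
    have := Nat.mul_le_mul_right (2*r+1) (show m'+1 ≤ r by omega)
    have e2 : (m'+1)*(2*r+1) = m'*(2*r+1) + (2*r+1) := by ring
    omega

lemma mark_B : (Wrd a b c d r s i j).getD (1+2*r+r*(2*r+1)) none = some b ∧
    1+2*r+r*(2*r+1) < (Wrd a b c d r s i j).length := by
  constructor
  · rw [Wrd_assoc]
    have harr : 1+2*r+r*(2*r+1) =
        1 + (r + (r + (r * ([some a] ++ List.replicate (2*r) (none : Option A)).length + 0))) := by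
      simp; ring
    rw [harr]
    refine getD_concat_right 1 (by simp) ?_
    refine getD_concat_right r (by simp) ?_
    refine getD_concat_right r (by simp) ?_
    refine getD_concat_right _ (by rw [listPow_length]) ?_
    exact getD_concat_left rfl (by simp)
  · rw [Wrd_length]; omega

lemma mark_c1 {t' : ℕ} (h : t' < s) :
    (Wrd a b c d r s i j).getD (1+2*r+r*(2*r+1)+1+(t'*(4*r+3)+(4*r+2))) none = some c ∧
      1+2*r+r*(2*r+1)+1+(t'*(4*r+3)+(4*r+2)) < (Wrd a b c d r s i j).length := by
  constructor
  · rw [Wrd_assoc]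
    have harr : 1+2*r+r*(2*r+1)+1+(t'*(4*r+3)+(4*r+2)) =
        1 + (r + (r + (r * ([some a] ++ List.replicate (2*r) (none : Option A)).length +
          (1 + (t' * (List.replicate (4*r+2) (none : Option A) ++ [some c]).length + (4*r+2)))))) := by
      simp; ring
    rw [harr]
    refine getD_concat_right 1 (by simp) ?_
    refine getD_concat_right r (by simp) ?_
    refine getD_concat_right r (by simp) ?_
    refine getD_concat_right _ (by rw [listPow_length]) ?_
    refine getD_concat_right 1 (by simp) ?_
    refine getD_concat_left ?_ ?_
    · rw [listPow_getD _ h (by simp)]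
      rw [List.getD_append_right _ _ _ _ (by simp)]
      simp
    · rw [listPow_length]
      exact mul_lt_mul_of_lt h (by simp)
  · rw [Wrd_length]
    have := Nat.mul_le_mul_right (4*r+3) (show t'+1 ≤ s by omega)
    have e2 : (t'+1)*(4*r+3) = t'*(4*r+3) + (4*r+3) := by ring
    omega

lemma mark_d {u' : ℕ} (h : u' ≤ r) :
    (Wrd a b c d r s i j).getD (1+2*r+r*(2*r+1)+1+s*(4*r+3)+(u'*(2*r+2)+(2*r+1))) none = some d ∧
      1+2*r+r*(2*r+1)+1+s*(4*r+3)+(u'*(2*r+2)+(2*r+1)) < (Wrd a b c d r s i j).length := by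
  constructor
  · rw [Wrd_assoc]
    have harr : 1+2*r+r*(2*r+1)+1+s*(4*r+3)+(u'*(2*r+2)+(2*r+1)) =
        1 + (r + (r + (r * ([some a] ++ List.replicate (2*r) (none : Option A)).length +
          (1 + (s * (List.replicate (4*r+2) (none : Option A) ++ [some c]).length +
          (u' * (List.replicate (2*r+1) (none : Option A) ++ [some d]).length + (2*r+1))))))) := by
      simp; ring
    rw [harr]
    refine getD_concat_right 1 (by simp) ?_
    refine getD_concat_right r (by simp) ?_
    refine getD_concat_right r (by simp) ?_
    refine getD_concat_right _ (by rw [listPow_length]) ?_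
    refine getD_concat_right 1 (by simp) ?_
    refine getD_concat_right _ (by rw [listPow_length]) ?_
    refine getD_concat_left ?_ ?_
    · rw [listPow_getD _ (show u' < r+1 by omega) (by simp)]
      rw [List.getD_append_right _ _ _ _ (by simp)]
      simp
    · rw [listPow_length]
      exact mul_lt_mul_of_lt (by omega) (by simp)
  · rw [Wrd_length]
    have := Nat.mul_le_mul_right (2*r+2) (show u'+1 ≤ r+1 by omega)
    have e2 : (u'+1)*(2*r+2) = u'*(2*r+2) + (2*r+2) := by ring
    omega

lemma mark_b2 {f' : ℕ} (h : f' < r) :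
    (Wrd a b c d r s i j).getD (1+2*r+r*(2*r+1)+1+s*(4*r+3)+(r+1)*(2*r+2)+f') none = some b ∧
      1+2*r+r*(2*r+1)+1+s*(4*r+3)+(r+1)*(2*r+2)+f' < (Wrd a b c d r s i j).length := by
  constructor
  · rw [Wrd_assoc]
    have harr : 1+2*r+r*(2*r+1)+1+s*(4*r+3)+(r+1)*(2*r+2)+f' =
        1 + (r + (r + (r * ([some a] ++ List.replicate (2*r) (none : Option A)).length +
          (1 + (s * (List.replicate (4*r+2) (none : Option A) ++ [some c]).length +
          ((r+1) * (List.replicate (2*r+1) (none : Option A) ++ [some d]).length + f')))))) := by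
      simp; ring
    rw [harr]
    refine getD_concat_right 1 (by simp) ?_
    refine getD_concat_right r (by simp) ?_
    refine getD_concat_right r (by simp) ?_
    refine getD_concat_right _ (by rw [listPow_length]) ?_
    refine getD_concat_right 1 (by simp) ?_
    refine getD_concat_right _ (by rw [listPow_length]) ?_
    refine getD_concat_right _ (by rw [listPow_length]) ?_
    exact getD_concat_left (getD_replicate h) (by simp [h])
  · rw [Wrd_length]; omega

lemma mark_c2 {v' : ℕ} (h : v' < i) :
    (Wrd a b c d r s i j).getD (1+2*r+r*(2*r+1)+1+s*(4*r+3)+(r+1)*(2*r+2)+r+(v'*(r+1)+r)) none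
      = some c ∧
      1+2*r+r*(2*r+1)+1+s*(4*r+3)+(r+1)*(2*r+2)+r+(v'*(r+1)+r) < (Wrd a b c d r s i j).length := by
  constructor
  · rw [Wrd_assoc]
    have harr : 1+2*r+r*(2*r+1)+1+s*(4*r+3)+(r+1)*(2*r+2)+r+(v'*(r+1)+r) =
        1 + (r + (r + (r * ([some a] ++ List.replicate (2*r) (none : Option A)).length +
          (1 + (s * (List.replicate (4*r+2) (none : Option A) ++ [some c]).length +
          ((r+1) * (List.replicate (2*r+1) (none : Option A) ++ [some d]).length +
          (r + (v' * (List.replicate r (none : Option A) ++ [some c]).length + r)))))))) := by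
      simp; ring
    rw [harr]
    refine getD_concat_right 1 (by simp) ?_
    refine getD_concat_right r (by simp) ?_
    refine getD_concat_right r (by simp) ?_
    refine getD_concat_right _ (by rw [listPow_length]) ?_
    refine getD_concat_right 1 (by simp) ?_
    refine getD_concat_right _ (by rw [listPow_length]) ?_
    refine getD_concat_right _ (by rw [listPow_length]) ?_
    refine getD_concat_right r (by simp) ?_
    refine getD_concat_left ?_ ?_
    · rw [listPow_getD _ h (by simp)]
      rw [List.getD_append_right _ _ _ _ (by simp)]
      simp
    · rw [listPow_length]
      exact mul_lt_mul_of_lt h (by simp)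
  · rw [Wrd_length]
    have := Nat.mul_le_mul_right (r+1) (show v'+1 ≤ i by omega)
    have e2 : (v'+1)*(r+1) = v'*(r+1) + (r+1) := by ring
    omega

lemma mark_cN :
    (Wrd a b c d r s i j).getD (1+2*r+r*(2*r+1)+1+s*(4*r+3)+(r+1)*(2*r+2)+r+i*(r+1)+(j-1)) none
      = some c ∧
      1+2*r+r*(2*r+1)+1+s*(4*r+3)+(r+1)*(2*r+2)+r+i*(r+1)+(j-1)
        < (Wrd a b c d r s i j).length := by
  constructor
  · rw [Wrd_assoc]
    have harr : 1+2*r+r*(2*r+1)+1+s*(4*r+3)+(r+1)*(2*r+2)+r+i*(r+1)+(j-1) =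
        1 + (r + (r + (r * ([some a] ++ List.replicate (2*r) (none : Option A)).length +
          (1 + (s * (List.replicate (4*r+2) (none : Option A) ++ [some c]).length +
          ((r+1) * (List.replicate (2*r+1) (none : Option A) ++ [some d]).length +
          (r + (i * (List.replicate r (none : Option A) ++ [some c]).length +
          ((j-1) + 0))))))))) := by
      simp; ring
    rw [harr]
    refine getD_concat_right 1 (by simp) ?_
    refine getD_concat_right r (by simp) ?_
    refine getD_concat_right r (by simp) ?_
    refine getD_concat_right _ (by rw [listPow_length]) ?_
    refine getD_concat_right 1 (by simp) ?_
    refine getD_concat_right _ (by rw [listPow_length]) ?_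
    refine getD_concat_right _ (by rw [listPow_length]) ?_
    refine getD_concat_right r (by simp) ?_
    refine getD_concat_right _ (by rw [listPow_length]) ?_
    refine getD_concat_right _ (by simp) ?_
    rfl
  · rw [Wrd_length]; omega

end Wrd

lemma close {A : Type*} {w : List (Option A)} {k x y : ℕ} {l₁ l₂ : A}
    (h1 : w.getD x none = some l₁) (h2 : w.getD y none = some l₂ ∧ y < w.length)
    (hne : l₁ ≠ l₂) (hxy : x + k = y) :
    ∃ p l₁' l₂', p + k < w.length ∧ w.getD p none = some l₁' ∧
      w.getD (p + k) none = some l₂' ∧ l₁' ≠ l₂' :=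
  ⟨x, l₁, l₂, by rw [hxy]; exact h2.2, h1, by rw [hxy]; exact h2.1, hne⟩

lemma divmod_decomp (E d : ℕ) (hd : 0 < d) : ∃ q rr, E = q*d + rr ∧ rr < d :=
  ⟨E/d, E%d, by rw [Nat.mul_comm]; exact (Nat.div_add_mod E d).symm, Nat.mod_lt _ hd⟩

lemma add_cancel_helper {x k yp T D : ℕ} (hθ : D = k + T) (h : x + D = yp + T) : x + k = yp := by
  omega

set_option maxHeartbeats 1000000 in
lemma wichmann_main {A : Type*} (a b c d : A) (hab : a ≠ b)
    (hac : a ≠ c) (had : a ≠ d) (hbc : b ≠ c) (hbd : b ≠ d) (hcd : c ≠ d)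
    (r s i j : ℕ) (hj1 : 1 ≤ j) (hj2 : j ≤ r + 1) :
    PartialWord.Unbordered (Wrd a b c d r s i j) := by
  apply unbordered_of_conflicts
  intro k hk1 hk2
  rw [Wrd_length] at hk2
  rcases le_or_gt k r with hA | hA
  · -- Region 1 : 1 ≤ k ≤ r
    exact close (mark_a0 a b c d r s i j).1
      (mark_b1 a b c d r s i j (show k - 1 < r by omega)) hab (by omega)
  rcases le_or_gt k (1+2*r+r*(2*r+1)) with hB | hB
  · -- Region 2 : r < k ≤ B
    obtain ⟨q, f, hdm, hf⟩ : ∃ q f, k = q*(2*r+1) + f ∧ f < 2*r+1 :=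
      ⟨k/(2*r+1), k%(2*r+1), by rw [Nat.mul_comm]; exact (Nat.div_add_mod k (2*r+1)).symm,
        Nat.mod_lt _ (by omega)⟩
    rcases Nat.eq_zero_or_pos q with hq0 | hq1
    · -- q = 0, so f = k ∈ [r+1, 2r], r ≥ 1
      subst hq0
      exact close (mark_b1 a b c d r s i j (show 2*r - k < r by omega)).1
        (mark_a a b c d r s i j (show 0 < r by omega)) hab.symm (by omega)
    rcases Nat.eq_zero_or_pos f with hf0 | hf1
    · -- f = 0
      subst hf0
      have hqle : q ≤ r + 1 := by
        by_contra hc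
        have h2 := Nat.mul_le_mul_right (2*r+1) (show r+2 ≤ q by omega)
        have h3 : (r+2)*(2*r+1) = r*(2*r+1)+(2*(2*r+1)) := by ring
        omega
      rcases eq_or_lt_of_le hqle with hq2 | hq2
      · subst hq2
        refine close (mark_a0 a b c d r s i j).1 (mark_B a b c d r s i j) hab ?_
        have h3 : (r+1)*(2*r+1) = r*(2*r+1)+(2*r+1) := by ring
        omega
      · obtain ⟨g, hg⟩ : ∃ g, r = q + g := ⟨r - q, by omega⟩
        subst hg
        subst hdm
        exact close (mark_a a b c d _ s i j (show g < q + g by omega)).1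
          (mark_B a b c d _ s i j) hab (by ring)
    -- f ≥ 1
    have hqr : q ≤ r := by
      by_contra hc
      have h2 := Nat.mul_le_mul_right (2*r+1) (show r+1 ≤ q by omega)
      have h3 : (r+1)*(2*r+1) = r*(2*r+1)+(2*r+1) := by ring
      omega
    rcases le_or_gt f r with hfr | hfr
    · -- f ∈ [1, r]
      rcases lt_trichotomy q f with hqf | hqf | hqf
      · -- q < f : pair (C + (r+1-q)Q, D + (f-q))
        obtain ⟨g, hg⟩ : ∃ g, r = q + g := ⟨r - q, by omega⟩
        obtain ⟨w, hw⟩ : ∃ w, f = q + 1 + w := ⟨f - q - 1, by omega⟩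
        subst hg; subst hw; subst hdm
        exact close (mark_d a b c d _ s i j (show g ≤ q + g by omega)).1
          (mark_b2 a b c d _ s i j (show w < q + g by omega)) hbd.symm (by ring)
      · -- q = f : pair (C, C + qQ)
        subst hqf
        obtain ⟨w, hw⟩ : ∃ w, q = w + 1 := ⟨q - 1, by omega⟩
        subst hw; subst hdm
        rcases Nat.eq_zero_or_pos s with hs0 | hs1
        · subst hs0
          exact close (mark_B a b c d r 0 i j).1
            (mark_d a b c d r 0 i j (show w ≤ r by omega)) hbd (by ring)
        · obtain ⟨s', hs'⟩ : ∃ s', s = s' + 1 := ⟨s - 1, by omega⟩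
          subst hs'
          exact close (mark_c1 a b c d r _ i j (show s' < s' + 1 by omega)).1
            (mark_d a b c d r _ i j (show w ≤ r by omega)) hcd (by ring)
      · -- f < q
        by_cases hc1 : q + 1 ≤ 2*f ∧ q + 1 ≤ f + s
        · -- pair (B + (s-(q-f))R4, C + (2f-q)Q)
          obtain ⟨t1, ht1⟩ : ∃ t1, q = f + 1 + t1 := ⟨q - f - 1, by omega⟩
          subst ht1
          obtain ⟨σ2, hσ2⟩ : ∃ σ2, s = t1 + 2 + σ2 := ⟨s - t1 - 2, by omega⟩
          subst hσ2
          obtain ⟨u2, hu2⟩ : ∃ u2, f = t1 + 2 + u2 := ⟨f - t1 - 2, by omega⟩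
          subst hu2; subst hdm
          exact close (mark_c1 a b c d r _ i j (show σ2 < t1 + 2 + σ2 by omega)).1
            (mark_d a b c d r _ i j (show u2 ≤ r by omega)) hcd (by ring)
        by_cases hc2 : f ≤ s
        · -- q ≥ 2f : pair ((r+1-(q-2f))P, B + f R4)
          obtain ⟨w, hw⟩ : ∃ w, q = 2*f + w := ⟨q - 2*f, by omega⟩
          subst hw
          obtain ⟨f1, hf1⟩ : ∃ f1, f = f1 + 1 := ⟨f - 1, by omega⟩
          subst hf1; subst hdm
          rcases Nat.eq_zero_or_pos w with hw0 | hw1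
          · subst hw0
            exact close (mark_B a b c d r s i j).1
              (mark_c1 a b c d r s i j (show f1 < s by omega)) hbc (by ring)
          · obtain ⟨g, hg⟩ : ∃ g, r = w + g := ⟨r - w, by omega⟩
            subst hg
            exact close (mark_a a b c d _ s i j (show g < w + g by omega)).1
              (mark_c1 a b c d _ s i j (show f1 < s by omega)) hac (by ring)
        · -- f ≥ s+1, q ≥ f+s : pair ((r+1-(q-f-s))P, C + (f-s)Q)
          obtain ⟨u2, hu2⟩ : ∃ u2, f = s + 1 + u2 := ⟨f - s - 1, by omega⟩
          obtain ⟨w, hw⟩ : ∃ w, q = f + s + w := ⟨q - f - s, by omega⟩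
          subst hw; subst hu2; subst hdm
          rcases Nat.eq_zero_or_pos w with hw0 | hw1
          · subst hw0
            exact close (mark_B a b c d r s i j).1
              (mark_d a b c d r s i j (show u2 ≤ r by omega)) hbd (by ring)
          · obtain ⟨g, hg⟩ : ∃ g, r = w + g := ⟨r - w, by omega⟩
            subst hg
            exact close (mark_a a b c d _ s i j (show g < w + g by omega)).1
              (mark_d a b c d _ s i j (show u2 ≤ w + g by omega)) had (by ring)
    · -- f ∈ [r+1, 2r]
      rcases eq_or_lt_of_le hqr with hq2 | hq2
      · -- q = r : pair (C + Q, D + (f - r - 1) + 1)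
        subst hq2
        refine close (mark_d a b c d q s i j (show 0 ≤ q by omega)).1
          (mark_b2 a b c d q s i j (show f - (q+1) < q by omega)) hbd.symm ?_
        have h3 : (q+1)*(2*q+2) = q*(2*q+1)+(3*q+2) := by ring
        omega
      · -- q < r : pair (2r+1-f, (q+1)P)
        exact close (mark_b1 a b c d r s i j (show 2*r - f < r by omega)).1
          (mark_a a b c d r s i j hq2) hab.symm (by omega)
  rcases le_or_gt k (1+2*r+r*(2*r+1)+s*(4*r+3)+(r+1)*(2*r+2)) with hD | hD
  · -- Region 3 : B < k ≤ D
    obtain ⟨θ, hθ⟩ : ∃ θ, 1+2*r+r*(2*r+1)+s*(4*r+3)+(r+1)*(2*r+2) = k + θ :=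
      ⟨1+2*r+r*(2*r+1)+s*(4*r+3)+(r+1)*(2*r+2) - k, by omega⟩
    obtain ⟨m, h, hmh, hh⟩ : ∃ m h, θ = m*(2*r+1) + h ∧ h < 2*r+1 :=
      ⟨θ/(2*r+1), θ%(2*r+1), by rw [Nat.mul_comm]; exact (Nat.div_add_mod θ (2*r+1)).symm,
        Nat.mod_lt _ (by omega)⟩
    subst hmh
    rcases le_or_gt m r with hm | hm
    · -- 3a
      rcases le_or_gt h m with h1 | h1
      · -- T1 : pair ((m-h)P, C + (r+1-h)Q)
        obtain ⟨g, hg⟩ : ∃ g, m = h + g := ⟨m - h, by omega⟩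
        subst hg
        obtain ⟨w, hw⟩ : ∃ w, r = h + w := ⟨r - h, by omega⟩
        subst hw
        rcases Nat.eq_zero_or_pos g with hg0 | hg1
        · subst hg0
          exact close (mark_a0 a b c d _ s i j).1
            (mark_d a b c d _ s i j (show w ≤ h + w by omega)) had
            (add_cancel_helper hθ (by ring))
        · obtain ⟨g2, hg2⟩ : ∃ g2, g = g2 + 1 := ⟨g - 1, by omega⟩
          subst hg2
          exact close (mark_a a b c d _ s i j (show g2 < h + w by omega)).1
            (mark_d a b c d _ s i j (show w ≤ h + w by omega)) had
            (add_cancel_helper hθ (by ring))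
      rcases le_or_gt h (m + r) with h2 | h2
      · -- T2 : pair (h - m, C + (r+1-m)Q)
        obtain ⟨e2, he2⟩ : ∃ e2, h = m + 1 + e2 := ⟨h - m - 1, by omega⟩
        subst he2
        obtain ⟨w, hw⟩ : ∃ w, r = m + w := ⟨r - m, by omega⟩
        subst hw
        exact close (mark_b1 a b c d _ s i j (show e2 < m + w by omega)).1
          (mark_d a b c d _ s i j (show w ≤ m + w by omega)) hbd
          (add_cancel_helper hθ (by ring))
      · -- T3 : pair ((m+1)P, D + (2r+1-h))
        obtain ⟨f2, hf2, hf2r⟩ : ∃ f2, h + f2 = 2*r ∧ f2 < r := ⟨2*r - h, by omega, by omega⟩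
        exact close (mark_a a b c d r s i j (show m < r by omega)).1
          (mark_b2 a b c d r s i j hf2r) hab
          (add_cancel_helper hθ (by omega))
    · -- 3b : m ≥ r+1
      obtain ⟨g', hg'⟩ : ∃ g', m = r + 1 + g' := ⟨m - (r+1), by omega⟩
      subst hg'
      obtain ⟨cc, ρ, hcp, hρ⟩ : ∃ cc ρ, g'*(2*r+1) + h = cc*(4*r+3) + ρ ∧ ρ < 4*r+3 :=
        divmod_decomp _ _ (by omega)
      have hE1 : (r+1+g')*(2*r+1) = r*(2*r+1) + (2*r+1) + g'*(2*r+1) := by ring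
      have hE2 : (r+1)*(2*r+2) = r*(2*r+1) + (3*r+2) := by ring
      have hbd1 : g'*(2*r+1) + h ≤ s*(4*r+3) + r := by omega
      have hcs : cc ≤ s := by
        by_contra hc
        have h2 := Nat.mul_le_mul_right (4*r+3) (show s+1 ≤ cc by omega)
        have h3 : (s+1)*(4*r+3) = s*(4*r+3) + (4*r+3) := by ring
        omega
      have hcsr : cc = s → ρ ≤ r := by
        intro hce; rw [hce] at hcp; omega
      rcases Nat.eq_zero_or_pos ρ with hρ0 | hρpos
      · -- ρ = 0 : pair (B + cc R4, D)
        subst hρ0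
        rcases Nat.eq_zero_or_pos cc with hcc0 | hcc1
        · subst hcc0
          refine close (mark_B a b c d r s i j).1
            (mark_d a b c d r s i j (show r ≤ r by omega)) hbd
            (add_cancel_helper hθ ?_)
          ring_nf at hcp ⊢
          omega
        · obtain ⟨c1, hc1'⟩ : ∃ c1, cc = c1 + 1 := ⟨cc - 1, by omega⟩
          subst hc1'
          refine close (mark_c1 a b c d r s i j (show c1 < s by omega)).1
            (mark_d a b c d r s i j (show r ≤ r by omega)) hcd
            (add_cancel_helper hθ ?_)
          ring_nf at hcp ⊢
          omega
      rcases le_or_gt ρ r with hρr | hρr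
      · -- ρ ∈ [1, r]
        by_cases hca : 2*ρ ≤ r ∧ ρ ≤ cc
        · -- pair (B + (cc-ρ)R4, C + (r+1-2ρ)Q)
          obtain ⟨w1, hw1⟩ : ∃ w1, cc = ρ + w1 := ⟨cc - ρ, by omega⟩
          subst hw1
          obtain ⟨z, hz⟩ : ∃ z, r = 2*ρ + z := ⟨r - 2*ρ, by omega⟩
          subst hz
          rcases Nat.eq_zero_or_pos w1 with hw0 | hw1'
          · subst hw0
            refine close (mark_B a b c d _ s i j).1
              (mark_d a b c d _ s i j (show z ≤ 2*ρ + z by omega)) hbd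
              (add_cancel_helper hθ ?_)
            ring_nf at hcp ⊢
            omega
          · obtain ⟨w2, hw2⟩ : ∃ w2, w1 = w2 + 1 := ⟨w1 - 1, by omega⟩
            subst hw2
            refine close (mark_c1 a b c d _ s i j (show w2 < s by omega)).1
              (mark_d a b c d _ s i j (show z ≤ 2*ρ + z by omega)) hcd
              (add_cancel_helper hθ ?_)
            ring_nf at hcp ⊢
            omega
        by_cases hcb : cc + ρ ≤ r
        · -- pair ((r+1+cc-ρ)P, C + (r+1-cc-ρ)Q)
          have hccρ : cc < ρ := by omega
          obtain ⟨w3, hw3⟩ : ∃ w3, r = cc + ρ + w3 := ⟨r - cc - ρ, by omega⟩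
          subst hw3
          refine close (mark_a a b c d _ s i j
              (show 2*cc + w3 < cc + ρ + w3 by omega)).1
            (mark_d a b c d _ s i j (show w3 ≤ cc + ρ + w3 by omega)) had
            (add_cancel_helper hθ ?_)
          ring_nf at hcp ⊢
          omega
        · -- pair ((2r+2-2ρ)P, B + (s+r+1-cc-ρ)R4)
          have h2ρ : r + 1 ≤ 2*ρ := by omega
          obtain ⟨δ3, hδ3⟩ : ∃ δ3, cc + ρ = r + 1 + δ3 := ⟨cc + ρ - r - 1, by omega⟩
          obtain ⟨tt, hs'⟩ : ∃ tt, s = δ3 + 1 + tt := ⟨s - δ3 - 1, by omega⟩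
          subst hs'
          rcases eq_or_lt_of_le h2ρ with hpar | hpar
          · -- 2ρ = r+1 : x = B
            refine close (mark_B a b c d r _ i j).1
              (mark_c1 a b c d r _ i j (show tt < δ3 + 1 + tt by omega)) hbc
              (add_cancel_helper hθ ?_)
            zify at hcp hδ3 hpar ⊢
            linear_combination (-1 : ℤ)*hcp - (4*r+3)*hδ3 - (2*r+1)*hpar
          · -- x = (2r+2-2ρ)P with index mm+1, mm = 2r+1-2ρ < r
            obtain ⟨mm, hmm, hmmr⟩ : ∃ mm, 2*ρ + mm = 2*r + 1 ∧ mm < r :=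
              ⟨2*r + 1 - 2*ρ, by omega, by omega⟩
            refine close (mark_a a b c d r _ i j hmmr).1
              (mark_c1 a b c d r _ i j (show tt < δ3 + 1 + tt by omega)) hac
              (add_cancel_helper hθ ?_)
            zify at hcp hδ3 hmm ⊢
            linear_combination (-1 : ℤ)*hcp - (4*r+3)*hδ3 + (2*r+1)*hmm
      rcases le_or_gt ρ (2*r+1) with hρ2 | hρ2
      · -- ρ ∈ [r+1, 2r+1] : y = B + (s - cc)R4, x = ρ - r - 1
        have hccs : cc < s := by
          rcases eq_or_lt_of_le hcs with hce | h'
          · exact absurd (hcsr hce) (by omega)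
          · exact h'
        obtain ⟨tt, hs'⟩ : ∃ tt, s = cc + 1 + tt := ⟨s - cc - 1, by omega⟩
        subst hs'
        rcases eq_or_lt_of_le (show r + 1 ≤ ρ by omega) with hρe | hρe
        · -- ρ = r+1 : x = 0
          refine close (mark_a0 a b c d r _ i j).1
            (mark_c1 a b c d r _ i j (show tt < cc + 1 + tt by omega)) hac
            (add_cancel_helper hθ ?_)
          zify at hcp hρe ⊢
          linear_combination (-1 : ℤ)*hcp + hρe
        · -- ρ ∈ [r+2, 2r+1] : x = ρ - r - 1 ∈ [1, r]
          obtain ⟨ee, hee⟩ : ∃ ee, ρ = r + 2 + ee := ⟨ρ - r - 2, by omega⟩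
          subst hee
          refine close (mark_b1 a b c d r _ i j (show ee < r by omega)).1
            (mark_c1 a b c d r _ i j (show tt < cc + 1 + tt by omega)) hbc
            (add_cancel_helper hθ ?_)
          ring_nf at hcp ⊢
          omega
      · -- ρ ≥ 2r+2 : σ = ρ - 2r - 2
        obtain ⟨σ, hσ⟩ : ∃ σ, ρ = 2*r + 2 + σ := ⟨ρ - 2*r - 2, by omega⟩
        subst hσ
        have hccs : cc < s := by
          rcases eq_or_lt_of_le hcs with hce | h'
          · exact absurd (hcsr hce) (by omega)
          · exact h'
        rcases le_or_gt σ r with hσr | hσr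
        · -- σ ∈ [0, r]
          by_cases hca' : 2*σ + 1 ≤ r ∧ σ ≤ cc
          · -- pair (B + (cc-σ)R4, C + (r-2σ)Q)
            obtain ⟨w1, hw1⟩ : ∃ w1, cc = σ + w1 := ⟨cc - σ, by omega⟩
            subst hw1
            obtain ⟨z, hz⟩ : ∃ z, r = 2*σ + 1 + z := ⟨r - 2*σ - 1, by omega⟩
            subst hz
            rcases Nat.eq_zero_or_pos w1 with hw0 | hw1'
            · subst hw0
              refine close (mark_B a b c d _ s i j).1
                (mark_d a b c d _ s i j (show z ≤ 2*σ + 1 + z by omega)) hbd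
                (add_cancel_helper hθ ?_)
              ring_nf at hcp ⊢
              omega
            · obtain ⟨w2, hw2⟩ : ∃ w2, w1 = w2 + 1 := ⟨w1 - 1, by omega⟩
              subst hw2
              refine close (mark_c1 a b c d _ s i j (show w2 < s by omega)).1
                (mark_d a b c d _ s i j (show z ≤ 2*σ + 1 + z by omega)) hcd
                (add_cancel_helper hθ ?_)
              ring_nf at hcp ⊢
              omega
          by_cases hcb' : cc + σ + 1 ≤ r
          · -- pair ((r+1+cc-σ)P, C + (r-cc-σ)Q)
            have hcσ : cc < σ := by omega
            obtain ⟨u2, hu2⟩ : ∃ u2, r = cc + σ + 1 + u2 := ⟨r - cc - σ - 1, by omega⟩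
            subst hu2
            refine close (mark_a a b c d _ s i j
                (show 2*cc + 1 + u2 < cc + σ + 1 + u2 by omega)).1
              (mark_d a b c d _ s i j (show u2 ≤ cc + σ + 1 + u2 by omega)) had
              (add_cancel_helper hθ ?_)
            ring_nf at hcp ⊢
            omega
          · -- pair ((2r+1-2σ)P, B + (s+r-cc-σ)R4)
            have h2σ : r ≤ 2*σ := by omega
            obtain ⟨δ3, hδ3⟩ : ∃ δ3, cc + σ = r + δ3 := ⟨cc + σ - r, by omega⟩
            obtain ⟨tt, hs'⟩ : ∃ tt, s = δ3 + 1 + tt := ⟨s - δ3 - 1, by omega⟩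
            subst hs'
            rcases eq_or_lt_of_le h2σ with hpar | hpar
            · -- 2σ = r : x = B
              refine close (mark_B a b c d r _ i j).1
                (mark_c1 a b c d r _ i j (show tt < δ3 + 1 + tt by omega)) hbc
                (add_cancel_helper hθ ?_)
              zify at hcp hδ3 hpar ⊢
              linear_combination (-1 : ℤ)*hcp - (4*r+3)*hδ3 - (2*r+1)*hpar
            · obtain ⟨mm, hmm, hmmr⟩ : ∃ mm, 2*σ + mm = 2*r ∧ mm < r :=
                ⟨2*r - 2*σ, by omega, by omega⟩
              refine close (mark_a a b c d r _ i j hmmr).1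
                (mark_c1 a b c d r _ i j (show tt < δ3 + 1 + tt by omega)) hac
                (add_cancel_helper hθ ?_)
              zify at hcp hδ3 hmm ⊢
              linear_combination (-1 : ℤ)*hcp - (4*r+3)*hδ3 + (2*r+1)*hmm
        · -- σ ∈ [r+1, 2r] : pair (B + (cc+1)R4, D + (2r+1-σ))
          obtain ⟨ss2, hσ2⟩ : ∃ ss2, σ = r + 1 + ss2 := ⟨σ - r - 1, by omega⟩
          subst hσ2
          obtain ⟨ff, hr2⟩ : ∃ ff, r = ss2 + 1 + ff := ⟨r - ss2 - 1, by omega⟩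
          subst hr2
          refine close (mark_c1 a b c d _ s i j (show cc < s by omega)).1
            (mark_b2 a b c d _ s i j (show ff < ss2 + 1 + ff by omega)) hbc.symm
            (add_cancel_helper hθ ?_)
          ring_nf at hcp ⊢
          omega
  -- Region 4 : k > D
  rcases le_or_gt k (1+2*r+r*(2*r+1)+s*(4*r+3)+(r+1)*(2*r+2)+r) with hE | hE
  · -- D < k ≤ D + r : pair (0, k)
    obtain ⟨t, ht, htr⟩ : ∃ t, k = (1+2*r+r*(2*r+1)+s*(4*r+3)+(r+1)*(2*r+2)) + 1 + t ∧ t < r :=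
      ⟨k - (1+2*r+r*(2*r+1)+s*(4*r+3)+(r+1)*(2*r+2)) - 1, by omega, by omega⟩
    exact close (mark_a0 a b c d r s i j).1
      (mark_b2 a b c d r s i j htr) hab (by omega)
  rcases le_or_gt k (1+2*r+r*(2*r+1)+s*(4*r+3)+(r+1)*(2*r+2)+r+i*(r+1)) with hF | hF
  · -- E < k ≤ E + i(r+1)
    obtain ⟨δ, hδ, hδ1, hδ2⟩ : ∃ δ, k = (1+2*r+r*(2*r+1)+s*(4*r+3)+(r+1)*(2*r+2)+r) + δ ∧
        1 ≤ δ ∧ δ ≤ i*(r+1) :=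
      ⟨k - (1+2*r+r*(2*r+1)+s*(4*r+3)+(r+1)*(2*r+2)+r), by omega, by omega, by omega⟩
    obtain ⟨w, z, hwz, hz⟩ : ∃ w z, δ = w*(r+1) + z ∧ z < r+1 :=
      ⟨δ/(r+1), δ%(r+1), by rw [Nat.mul_comm]; exact (Nat.div_add_mod δ (r+1)).symm,
        Nat.mod_lt _ (by omega)⟩
    have hwi : z = 0 → (1 ≤ w ∧ w - 1 < i) := by
      intro hz0
      have hw1 : 1 ≤ w := by
        by_contra hc
        have hw0 : w = 0 := by omega
        subst hw0
        omega
      refine ⟨hw1, ?_⟩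
      by_contra hc
      push_neg at hc
      have h2 := Nat.mul_le_mul_right (r+1) (show i + 1 ≤ w by omega)
      have h3 : (i+1)*(r+1) = i*(r+1) + (r+1) := by ring
      omega
    rcases Nat.eq_zero_or_pos z with hz0 | hz1
    · -- z = 0 : x = 0, y = E + w(r+1)
      subst hz0
      obtain ⟨w', hw'⟩ : ∃ w', w = w' + 1 := ⟨w - 1, by omega⟩
      subst hw'
      refine close (mark_a0 a b c d r s i j).1
        (mark_c2 a b c d r s i j (show w' < i by omega)) hac ?_
      have h3 : (w'+1)*(r+1) = w'*(r+1) + (r+1) := by ring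
      omega
    · -- z ≥ 1 : x = r+1-z, y = E + (w+1)(r+1)
      have hwi2 : w < i := by
        by_contra hc
        have h2 := Nat.mul_le_mul_right (r+1) (show i ≤ w by omega)
        omega
      refine close (mark_b1 a b c d r s i j (show r - z < r by omega)).1
        (mark_c2 a b c d r s i j hwi2) hbc ?_
      omega
  · -- k > E + i(r+1) : y = N
    obtain ⟨x0, hx0, hx0r⟩ : ∃ x0, k + x0 =
        1+2*r+r*(2*r+1)+s*(4*r+3)+(r+1)*(2*r+2)+r+i*(r+1)+(j-1)+1 ∧ x0 ≤ r :=
      ⟨1+2*r+r*(2*r+1)+s*(4*r+3)+(r+1)*(2*r+2)+r+i*(r+1)+(j-1)+1 - k, by omega, by omega⟩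
    rcases Nat.eq_zero_or_pos x0 with hx00 | hx01
    · subst hx00
      exact close (mark_a0 a b c d r s i j).1 (mark_cN a b c d r s i j) hac (by omega)
    · exact close (mark_b1 a b c d r s i j (show x0 - 1 < r by omega)).1
        (mark_cN a b c d r s i j) hbc (by omega)

/-- For four distinct letters `a, b, c, d`, all `r, s, i ∈ ℕ` and all `j`
with `1 ≤ j ≤ r + 1`, the extended Wichmann word
`W(r,s,i,j) = a bʳ ⋄ʳ (a ⋄²ʳ)ʳ b (⋄⁴ʳ⁺²c)ˢ (⋄²ʳ⁺¹d)ʳ⁺¹ bʳ (⋄ʳc)ⁱ ⋄ʲ⁻¹ c` over the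
alphabet `{a,b,c,d}` is unbordered. -/
theorem extendedWichmannWord_unbordered {A : Type*} (a b c d : A) (hab : a ≠ b)
    (hac : a ≠ c) (had : a ≠ d) (hbc : b ≠ c) (hbd : b ≠ d) (hcd : c ≠ d)
    (r s i j : ℕ) (hj1 : 1 ≤ j) (hj2 : j ≤ r + 1) :
    PartialWord.Unbordered
      (([some a] ++ List.replicate r (some b) ++ List.replicate r none ++
        listPow ([some a] ++ List.replicate (2 * r) none) r ++ [some b] ++
        listPow (List.replicate (4 * r + 2) none ++ [some c]) s ++
        listPow (List.replicate (2 * r + 1) none ++ [some d]) (r + 1) ++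
        List.replicate r (some b) ++
        listPow (List.replicate r none ++ [some c]) i ++
        List.replicate (j - 1) none ++ [some c] : List (Option A))) :=
  wichmann_main a b c d hab hac had hbc hbd hcd r s i j hj1 hj2
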